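/- Let T0 and T1 be the Goursat matrices with parameters a1, a2, b, A, B, C, D, where a1, a2, b ∈ ℂ satisfy |a1| = |a2| = |b| = 1, A, B, C, D are real numbers with AD − BC ≠ 0, and let H be the Goursat Hermitian matrix built from A, B, C, D. Then T0ᴴ·H·T0 = H and T1ᴴ·H·T1 = H, where ᴴ denotes conjugate transpose; that is, H is an invariant Hermitian form for the group generated by T0 and T1. -/

import Mathlib

open Matrix

/-- Goursat's matrix `T0` with parameters `a1, a2, b, A, B, C, D`. -/
noncomputable def goursatT0 (a1 a2 A B C D : ℂ) : Matrix (Fin 4) (Fin 4) ℂ :=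
  !![1, 0, A * (1 - a1), B * (1 - a2);
     0, 1, C * (1 - a1), D * (1 - a2);
     0, 0, a1, 0;
     0, 0, 0, a2]

/-- Goursat's matrix `T1` with parameter `b`. -/
noncomputable def goursatT1 (b : ℂ) : Matrix (Fin 4) (Fin 4) ℂ :=
  !![b, 0, 0, 0;
     0, b, 0, 0;
     1 - b, 0, 1, 0;
     0, 1 - b, 0, 1]

/-- The Goursat Hermitian matrix built from real parameters `A, B, C, D`, with
`E = (A+D−1)/(AD−BC)`. -/
noncomputable def goursatH (A B C D : ℝ) : Matrix (Fin 4) (Fin 4) ℝ :=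
  (A * D - B * C) •
    !![C * (1 - D * ((A + D - 1) / (A * D - B * C))),
         B * C * ((A + D - 1) / (A * D - B * C)), C * (1 - D), B * C;
       B * C * ((A + D - 1) / (A * D - B * C)),
         B * (1 - A * ((A + D - 1) / (A * D - B * C))), B * C, B * (1 - A);
       C * (1 - D), B * C, C * (1 - D), B * C;
       B * C, B * (1 - A), B * C, B * (1 - A)]

set_option maxHeartbeats 1000000 in
/-- When `|a1| = |a2| = |b| = 1` and `A, B, C, D` are real with `AD − BC ≠ 0`,
the Goursat Hermitian matrix `H` is invariant under the Goursat matrices: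
`T0ᴴ H T0 = H` and `T1ᴴ H T1 = H`. -/
theorem stmt_10 (a1 a2 b : ℂ) (A B C D : ℝ)
    (ha1 : ‖a1‖ = 1) (ha2 : ‖a2‖ = 1)
    (hb : ‖b‖ = 1) (h : A * D - B * C ≠ 0) :
    (goursatT0 a1 a2 (A : ℂ) (B : ℂ) (C : ℂ) (D : ℂ))ᴴ *
        ((goursatH A B C D).map Complex.ofReal) *
        goursatT0 a1 a2 (A : ℂ) (B : ℂ) (C : ℂ) (D : ℂ) =
      (goursatH A B C D).map Complex.ofReal ∧
    (goursatT1 b)ᴴ * ((goursatH A B C D).map Complex.ofReal) * goursatT1 b =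
      (goursatH A B C D).map Complex.ofReal := by
  have hC : ((A : ℂ) * D - B * C) ≠ 0 := fun hc => h (by exact_mod_cast hc)
  have na1 : a1 ≠ 0 := fun hz => by simp [hz] at ha1
  have na2 : a2 ≠ 0 := fun hz => by simp [hz] at ha2
  have nb : b ≠ 0 := fun hz => by simp [hz] at hb
  have e1 : (starRingEnd ℂ) a1 = a1⁻¹ := (Complex.inv_eq_conj ha1).symm
  have e2 : (starRingEnd ℂ) a2 = a2⁻¹ := (Complex.inv_eq_conj ha2).symm
  have e3 : (starRingEnd ℂ) b = b⁻¹ := (Complex.inv_eq_conj hb).symm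
  have hH : (goursatH A B C D).map Complex.ofReal =
      !![(C : ℂ) * ((A*D - B*C) - D*(A + D - 1)), B*C*(A + D - 1), (A*D - B*C)*(C*(1 - D)), (A*D - B*C)*(B*C);
         (B : ℂ)*C*(A + D - 1), B*((A*D - B*C) - A*(A + D - 1)), (A*D - B*C)*(B*C), (A*D - B*C)*(B*(1 - A));
         ((A : ℂ)*D - B*C)*(C*(1 - D)), (A*D - B*C)*(B*C), (A*D - B*C)*(C*(1 - D)), (A*D - B*C)*(B*C);
         ((A : ℂ)*D - B*C)*(B*C), (A*D - B*C)*(B*(1 - A)), (A*D - B*C)*(B*C), (A*D - B*C)*(B*(1 - A))] := by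
    ext i j
    fin_cases i <;> fin_cases j <;>
      simp [goursatH] <;> push_cast <;> field_simp <;> ring
  rw [hH]
  constructor <;>
  · ext i j
    fin_cases i <;> fin_cases j <;>
      simp [goursatT0, goursatT1, Matrix.mul_apply, Fin.sum_univ_four, e1, e2, e3,
        Matrix.vecHead, Matrix.vecTail, Complex.conj_ofReal] <;>
      (first | (field_simp; ring1) | ring1 | rfl)
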